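/- Let A be a real n×n matrix, let ε ∈ [0,1], and let x* ∈ {−1,1}^n. Let x̃ = (x̃₁,…,x̃ₙ) be mutually independent {−1,1}-valued random variables with Pr(x̃ᵢ = xᵢ*) = (1+ε)/2 for each i. Then E[‖A(εx* − x̃)‖₁] ≤ √(n(1−ε²)) · ‖A‖_F; in particular E[‖A(εx* − x̃)‖₁] ≤ √n · ‖A‖_F. -/

import Mathlib

open Finset

noncomputable def sg (b : Bool) : ℝ := if b then 1 else -1

noncomputable def advProb {ι : Type*} [Fintype ι] (ε : ℝ) (xs : ι → ℝ) (s : ι → Bool) : ℝ :=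
  ∏ i, if sg (s i) = xs i then (1 + ε) / 2 else (1 - ε) / 2

noncomputable def wgt (ε x : ℝ) (b : Bool) : ℝ := if sg b = x then (1 + ε) / 2 else (1 - ε) / 2

lemma advProb_eq {ι : Type*} [Fintype ι] (ε : ℝ) (xs : ι → ℝ) (s : ι → Bool) :
    advProb ε xs s = ∏ i, wgt ε (xs i) (s i) := rfl

lemma sum_wgt (ε x : ℝ) (hx : x = 1 ∨ x = -1) : ∑ b, wgt ε x b = 1 := by
  rcases hx with h | h <;> subst h <;> norm_num [wgt, sg] <;> ring

lemma sum_wgt_Zsq (ε x : ℝ) (hx : x = 1 ∨ x = -1) :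
    ∑ b, wgt ε x b * (ε * x - sg b) ^ 2 = 1 - ε ^ 2 := by
  rcases hx with h | h <;> subst h <;> norm_num [wgt, sg] <;> ring

lemma sum_wgt_Z (ε x : ℝ) (hx : x = 1 ∨ x = -1) :
    ∑ b, wgt ε x b * (ε * x - sg b) = 0 := by
  rcases hx with h | h <;> subst h <;> norm_num [wgt, sg] <;> ring

lemma wgt_nonneg (ε x : ℝ) (hε : ε ∈ Set.Icc (0:ℝ) 1) (b : Bool) : 0 ≤ wgt ε x b := by
  obtain ⟨h0, h1⟩ := hε
  unfold wgt; split <;> nlinarith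

lemma sum_pi_bool {n : ℕ} (F : Fin n → Bool → ℝ) :
    ∑ s : Fin n → Bool, ∏ i, F i (s i) = ∏ i, ∑ b, F i b :=
  (Fintype.prod_sum F).symm

/-- Expectation of a function of two (possibly equal) coordinates factorizes. -/
lemma exp_single {n : ℕ} (ε : ℝ) (xs : Fin n → ℝ) (hx : ∀ i, xs i = 1 ∨ xs i = -1)
    (j : Fin n) (g : Bool → ℝ) :
    ∑ s : Fin n → Bool, advProb ε xs s * g (s j) = ∑ b, wgt ε (xs j) b * g b := by
  have key : ∀ s : Fin n → Bool, advProb ε xs s * g (s j)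
      = ∏ i, (wgt ε (xs i) (s i) * if i = j then g (s i) else 1) := by
    intro s
    rw [advProb_eq, Finset.prod_mul_distrib, Finset.prod_ite_eq' Finset.univ j (fun i => g (s i))]
    simp
  simp_rw [key]
  rw [sum_pi_bool (fun i b => wgt ε (xs i) b * if i = j then g b else 1)]
  rw [← Finset.mul_prod_erase Finset.univ _ (Finset.mem_univ j)]
  have hrest : (∏ i ∈ Finset.univ.erase j, ∑ b, wgt ε (xs i) b * if i = j then g b else 1) = 1 := by
    apply Finset.prod_eq_one
    intro i hi
    have hij : i ≠ j := (Finset.mem_erase.1 hi).1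
    simpa [hij] using sum_wgt ε (xs i) (hx i)
  rw [hrest, mul_one]
  simp

lemma exp_pair {n : ℕ} (ε : ℝ) (xs : Fin n → ℝ) (hx : ∀ i, xs i = 1 ∨ xs i = -1)
    {j k : Fin n} (hjk : j ≠ k) (g g' : Bool → ℝ) :
    ∑ s : Fin n → Bool, advProb ε xs s * (g (s j) * g' (s k))
      = (∑ b, wgt ε (xs j) b * g b) * (∑ b, wgt ε (xs k) b * g' b) := by
  have key : ∀ s : Fin n → Bool, advProb ε xs s * (g (s j) * g' (s k))
      = ∏ i, (wgt ε (xs i) (s i) * ((if i = j then g (s i) else 1) *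
          (if i = k then g' (s i) else 1))) := by
    intro s
    rw [advProb_eq]
    rw [Finset.prod_mul_distrib, Finset.prod_mul_distrib,
      Finset.prod_ite_eq' Finset.univ j (fun i => g (s i)),
      Finset.prod_ite_eq' Finset.univ k (fun i => g' (s i))]
    simp
  simp_rw [key]
  rw [sum_pi_bool (fun i b => wgt ε (xs i) b * ((if i = j then g b else 1) * if i = k then g' b else 1))]
  rw [← Finset.mul_prod_erase Finset.univ _ (Finset.mem_univ j)]
  have hk : k ∈ (Finset.univ : Finset (Fin n)).erase j := by
    simp [hjk.symm]
  rw [← Finset.mul_prod_erase _ _ hk]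
  have h1 : (∑ b, wgt ε (xs j) b * ((if j = j then g b else 1) * if j = k then g' b else 1))
      = ∑ b, wgt ε (xs j) b * g b := by simp [hjk]
  have h2 : (∑ b, wgt ε (xs k) b * ((if k = j then g b else 1) * if k = k then g' b else 1))
      = ∑ b, wgt ε (xs k) b * g' b := by simp [hjk.symm]
  have hrest : (∏ i ∈ (Finset.univ.erase j).erase k,
      ∑ b, wgt ε (xs i) b * ((if i = j then g b else 1) * if i = k then g' b else 1)) = 1 := by
    apply Finset.prod_eq_one
    intro i hi
    have hik : i ≠ k := (Finset.mem_erase.1 hi).1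
    have hij : i ≠ j := (Finset.mem_erase.1 ((Finset.mem_erase.1 hi).2)).1
    simpa [hij, hik] using sum_wgt ε (xs i) (hx i)
  rw [h1, h2, hrest, mul_one]

theorem expected_l1_norm_advice_error_le
    (n : ℕ) (A : Matrix (Fin n) (Fin n) ℝ)
    (ε : ℝ) (hε : ε ∈ Set.Icc (0 : ℝ) 1)
    (xstar : Fin n → ℝ) (hxs : ∀ i, xstar i = 1 ∨ xstar i = -1) :
    (∑ s : Fin n → Bool, advProb ε xstar s *
        ∑ i, |A.mulVec (fun j => ε * xstar j - sg (s j)) i|)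
      ≤ Real.sqrt (n * (1 - ε ^ 2)) * Real.sqrt (∑ i, ∑ j, (A i j) ^ 2) ∧
    (∑ s : Fin n → Bool, advProb ε xstar s *
        ∑ i, |A.mulVec (fun j => ε * xstar j - sg (s j)) i|)
      ≤ Real.sqrt n * Real.sqrt (∑ i, ∑ j, (A i j) ^ 2) := by
  set P : (Fin n → Bool) → ℝ := advProb ε xstar with hP
  set Z : (Fin n → Bool) → Fin n → ℝ := fun s j => ε * xstar j - sg (s j) with hZ
  have hPnn : ∀ s, 0 ≤ P s := fun s =>
    Finset.prod_nonneg fun i _ => wgt_nonneg ε (xstar i) hε (s i)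
  have hPsum : ∑ s, P s = 1 := by
    simp_rw [hP, advProb_eq, sum_pi_bool]
    exact Finset.prod_eq_one fun i _ => sum_wgt ε (xstar i) (hxs i)
  -- second moment of Y i
  have hmom : ∀ i : Fin n, ∑ s, P s * (∑ j, A i j * Z s j) ^ 2
      = (1 - ε ^ 2) * ∑ j, (A i j) ^ 2 := by
    intro i
    have expand : ∀ s, (∑ j, A i j * Z s j) ^ 2
        = ∑ j, ∑ k, (A i j * A i k) * (Z s j * Z s k) := by
      intro s
      rw [sq, Finset.sum_mul_sum]
      apply Finset.sum_congr rfl; intro j _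
      apply Finset.sum_congr rfl; intro k _
      ring
    simp_rw [expand, Finset.mul_sum]
    rw [Finset.sum_comm]
    have : ∀ j : Fin n, ∑ s : Fin n → Bool, ∑ k, P s * ((A i j * A i k) * (Z s j * Z s k))
        = (1 - ε ^ 2) * (A i j) ^ 2 := by
      intro j
      rw [Finset.sum_comm]
      have hterm : ∀ k : Fin n, ∑ s : Fin n → Bool, P s * ((A i j * A i k) * (Z s j * Z s k))
          = if j = k then (1 - ε ^ 2) * (A i j) ^ 2 else 0 := by
        intro k
        by_cases hjk : j = k
        · subst hjk
          rw [if_pos rfl]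
          have : ∀ s, P s * ((A i j * A i j) * (Z s j * Z s j))
              = (A i j)^2 * (P s * (ε * xstar j - sg (s j)) ^ 2) := by
            intro s; simp only [hZ]; ring
          simp_rw [this, ← Finset.mul_sum]
          rw [exp_single ε xstar hxs j (fun b => (ε * xstar j - sg b) ^ 2),
            sum_wgt_Zsq ε (xstar j) (hxs j)]
          ring
        · simp only [if_neg hjk]
          have : ∀ s, P s * ((A i j * A i k) * (Z s j * Z s k))
              = (A i j * A i k) * (P s * ((ε * xstar j - sg (s j)) * (ε * xstar k - sg (s k)))) := by
            intro s; simp only [hZ]; ring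
          simp_rw [this, ← Finset.mul_sum]
          rw [exp_pair ε xstar hxs hjk (fun b => ε * xstar j - sg b) (fun b => ε * xstar k - sg b),
            sum_wgt_Z ε (xstar j) (hxs j)]
          ring
      simp_rw [hterm]
      simp
    simp_rw [this]
  -- E|Y i| ≤ sqrt second moment
  have habs : ∀ i : Fin n, ∑ s, P s * |∑ j, A i j * Z s j|
      ≤ Real.sqrt ((1 - ε ^ 2) * ∑ j, (A i j) ^ 2) := by
    intro i
    rw [← hmom i]
    set f : (Fin n → Bool) → ℝ := fun s => ∑ j, A i j * Z s j
    have h1 : ∀ s, P s * |f s| = Real.sqrt (P s) * (Real.sqrt (P s) * |f s|) := by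
      intro s
      rw [← mul_assoc, Real.mul_self_sqrt (hPnn s)]
    have cs := Finset.sum_mul_sq_le_sq_mul_sq Finset.univ
      (fun s => Real.sqrt (P s)) (fun s => Real.sqrt (P s) * |f s|)
    have h2 : ∑ s, Real.sqrt (P s) ^ 2 = 1 := by
      simp_rw [Real.sq_sqrt (hPnn _)]; exact hPsum
    have h3 : ∑ s, (Real.sqrt (P s) * |f s|) ^ 2 = ∑ s, P s * f s ^ 2 := by
      apply Finset.sum_congr rfl; intro s _
      rw [mul_pow, Real.sq_sqrt (hPnn s), sq_abs]
    rw [h2, h3, one_mul] at cs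
    refine (Finset.sum_congr rfl fun s _ => h1 s).trans_le ?_
    have hnn : 0 ≤ ∑ s, Real.sqrt (P s) * (Real.sqrt (P s) * |f s|) :=
      Finset.sum_nonneg fun s _ => mul_nonneg (Real.sqrt_nonneg _)
        (mul_nonneg (Real.sqrt_nonneg _) (abs_nonneg _))
    calc ∑ s, Real.sqrt (P s) * (Real.sqrt (P s) * |f s|)
        = Real.sqrt ((∑ s, Real.sqrt (P s) * (Real.sqrt (P s) * |f s|)) ^ 2) := by
          rw [Real.sqrt_sq hnn]
      _ ≤ Real.sqrt (∑ s, P s * f s ^ 2) := Real.sqrt_le_sqrt cs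
  -- rewrite LHS
  have hlhs : (∑ s : Fin n → Bool, P s * ∑ i, |A.mulVec (fun j => Z s j) i|)
      = ∑ i, ∑ s, P s * |∑ j, A i j * Z s j| := by
    simp_rw [Finset.mul_sum]
    rw [Finset.sum_comm]
    apply Finset.sum_congr rfl; intro i _
    apply Finset.sum_congr rfl; intro s _
    congr 1
  have main : (∑ s : Fin n → Bool, P s * ∑ i, |A.mulVec (fun j => Z s j) i|)
      ≤ Real.sqrt (n * (1 - ε ^ 2)) * Real.sqrt (∑ i, ∑ j, (A i j) ^ 2) := by
    rw [hlhs]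
    have step1 : ∑ i : Fin n, ∑ s, P s * |∑ j, A i j * Z s j|
        ≤ ∑ i : Fin n, Real.sqrt ((1 - ε ^ 2) * ∑ j, (A i j) ^ 2) :=
      Finset.sum_le_sum fun i _ => habs i
    refine step1.trans ?_
    -- Cauchy-Schwarz with ones
    have cs := Finset.sum_mul_sq_le_sq_mul_sq Finset.univ
      (fun _ : Fin n => (1:ℝ)) (fun i => Real.sqrt ((1 - ε ^ 2) * ∑ j, (A i j) ^ 2))
    simp only [one_mul, one_pow] at cs
    have h2 : ∀ i : Fin n, Real.sqrt ((1 - ε ^ 2) * ∑ j, (A i j) ^ 2) ^ 2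
        = (1 - ε ^ 2) * ∑ j, (A i j) ^ 2 := by
      intro i
      apply Real.sq_sqrt
      apply mul_nonneg (by nlinarith [hε.1, hε.2]) (Finset.sum_nonneg fun j _ => sq_nonneg _)
    simp_rw [h2] at cs
    have hnn : 0 ≤ ∑ i : Fin n, Real.sqrt ((1 - ε ^ 2) * ∑ j, (A i j) ^ 2) :=
      Finset.sum_nonneg fun i _ => Real.sqrt_nonneg _
    calc ∑ i : Fin n, Real.sqrt ((1 - ε ^ 2) * ∑ j, (A i j) ^ 2)
        = Real.sqrt ((∑ i : Fin n, Real.sqrt ((1 - ε ^ 2) * ∑ j, (A i j) ^ 2)) ^ 2) := by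
          rw [Real.sqrt_sq hnn]
      _ ≤ Real.sqrt ((∑ _i : Fin n, (1:ℝ)) * ∑ i, (1 - ε ^ 2) * ∑ j, (A i j) ^ 2) :=
          Real.sqrt_le_sqrt cs
      _ = Real.sqrt ((n * (1 - ε ^ 2)) * ∑ i, ∑ j, (A i j) ^ 2) := by
          congr 1
          rw [Finset.sum_const, Finset.card_univ, Fintype.card_fin, nsmul_eq_mul, mul_one,
            ← Finset.mul_sum]
          ring
      _ = Real.sqrt (n * (1 - ε ^ 2)) * Real.sqrt (∑ i, ∑ j, (A i j) ^ 2) :=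
          Real.sqrt_mul (mul_nonneg (Nat.cast_nonneg n) (by nlinarith [hε.1, hε.2])) _
  refine ⟨main, main.trans ?_⟩
  apply mul_le_mul_of_nonneg_right _ (Real.sqrt_nonneg _)
  apply Real.sqrt_le_sqrt
  nlinarith [Nat.cast_nonneg (α := ℝ) n, sq_nonneg ε]
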